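/- arXiv:1001.2587 — 5 statements merged into one kernel-verified Lean document; each statement's English description precedes it below -/
import Mathlib

section
/- Let $n\ge 3$, $-2<l_2<l_1\le 0$, $1<p<q$, and let $u:(0,\infty)\to(0,\infty)$ be a $C^2$ solution of $u''+\frac{n-1}{r}u'+r^{l_1}u^p+r^{l_2}u^q=0$. If $u(r)\to\infty$ as $r\to 0^+$, then there exist $C>0$ and $r_0>0$ such that $u(r)\le C\, r^{-\frac{2+l_2}{q-1}}$ for all $0<r<r_0$. -/
open Filter Topology Set

set_option maxHeartbeats 1000000 in
theorem stmt_0 (n : ℕ) (hn : 3 ≤ n) (l₁ l₂ p q : ℝ)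
    (hl₂ : -2 < l₂) (hl : l₂ < l₁) (hl₁ : l₁ ≤ 0) (hp : 1 < p) (hpq : p < q)
    (u : ℝ → ℝ) (hupos : ∀ r > 0, 0 < u r)
    (hC2 : ContDiffOn ℝ 2 u (Set.Ioi 0))
    (hode : ∀ r > 0, deriv (deriv u) r + ((n : ℝ) - 1) / r * deriv u r
      + r ^ l₁ * u r ^ p + r ^ l₂ * u r ^ q = 0)
    (hblow : Tendsto u (𝓝[>] (0 : ℝ)) atTop) :
    ∃ C > 0, ∃ r₀ > 0, ∀ r, 0 < r → r < r₀ →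
      u r ≤ C * r ^ (-(2 + l₂) / (q - 1)) := by
  -- basic setup
  set a : ℝ := (n : ℝ) - 1 with ha_def
  have hn3 : (3 : ℝ) ≤ (n : ℝ) := by exact_mod_cast hn
  have ha2 : (2 : ℝ) ≤ a := by simp only [ha_def]; linarith
  have hq0 : 0 < q - 1 := by linarith
  -- differentiability facts
  have hder := (contDiffOn_succ_iff_deriv_of_isOpen (n := 1) (f := u)
    (s := Ioi (0:ℝ)) isOpen_Ioi).mp (by exact_mod_cast hC2)
  have hu1 : ∀ t ∈ Ioi (0:ℝ), HasDerivAt u (deriv u t) t := fun t ht =>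
    ((hder.1.differentiableAt (Ioi_mem_nhds ht)).hasDerivAt)
  have hdu1 : DifferentiableOn ℝ (deriv u) (Ioi 0) := hder.2.2.differentiableOn one_ne_zero
  have hu2 : ∀ t ∈ Ioi (0:ℝ), HasDerivAt (deriv u) (deriv (deriv u) t) t := fun t ht =>
    ((hdu1.differentiableAt (Ioi_mem_nhds ht)).hasDerivAt)
  have hucont : ContinuousOn u (Ioi 0) := hder.1.continuousOn
  have hducont : ContinuousOn (deriv u) (Ioi 0) := hder.2.2.continuousOn
  -- the function v
  set v : ℝ → ℝ := fun τ => τ ^ a * deriv u τ with hv_def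
  set V' : ℝ → ℝ := fun τ => a * τ ^ (a - 1) * deriv u τ + τ ^ a * deriv (deriv u) τ with hV'_def
  have hVd : ∀ τ ∈ Ioi (0:ℝ), HasDerivAt v (V' τ) τ := by
    intro τ hτ
    exact (Real.hasDerivAt_rpow_const (Or.inl (ne_of_gt hτ))).mul (hu2 τ hτ)
  have hFpos : ∀ τ ∈ Ioi (0:ℝ), 0 < τ ^ l₁ * u τ ^ p + τ ^ l₂ * u τ ^ q := by
    intro τ hτ
    have h1 := hupos τ hτ
    have h2 : (0:ℝ) < τ := hτ
    positivity
  have hV'eq : ∀ τ ∈ Ioi (0:ℝ),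
      V' τ = -(τ ^ a * (τ ^ l₁ * u τ ^ p + τ ^ l₂ * u τ ^ q)) := by
    intro τ hτ
    have hτ0 : (0:ℝ) < τ := hτ
    have h := hode τ hτ0
    have h2 : deriv (deriv u) τ = -(a / τ * deriv u τ + (τ ^ l₁ * u τ ^ p + τ ^ l₂ * u τ ^ q)) := by
      simp only [ha_def]; linarith
    have h3 : τ ^ (a - 1) = τ ^ a / τ := Real.rpow_sub_one (ne_of_gt hτ0) a
    simp only [hV'_def, h2, h3]
    field_simp
    ring
  have hV'np : ∀ τ ∈ Ioi (0:ℝ), V' τ ≤ 0 := by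
    intro τ hτ
    rw [hV'eq τ hτ]
    have := hFpos τ hτ
    have hτ0 : (0:ℝ) < τ := hτ
    have : 0 < τ ^ a := Real.rpow_pos_of_pos hτ0 a
    nlinarith [hFpos τ hτ]
  have hvcont : ContinuousOn v (Ioi 0) := by
    apply ContinuousOn.mul _ hducont
    exact continuousOn_id.rpow_const (fun τ hτ => Or.inl (ne_of_gt hτ))
  have hvanti : AntitoneOn v (Ioi 0) := by
    apply antitoneOn_of_hasDerivWithinAt_nonpos (convex_Ioi 0) hvcont
    · intro τ hτ
      rw [interior_Ioi] at hτ
      exact (hVd τ hτ).hasDerivWithinAt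
    · intro τ hτ
      rw [interior_Ioi] at hτ
      exact hV'np τ hτ
  -- Step C : deriv u ≤ 0 on Ioi 0
  have hdunp : ∀ t ∈ Ioi (0:ℝ), deriv u t ≤ 0 := by
    intro t₀ ht₀
    by_contra hcon
    push_neg at hcon
    have ht₀0 : (0:ℝ) < t₀ := ht₀
    have hvpos : 0 < v t₀ := by
      have : 0 < t₀ ^ a := Real.rpow_pos_of_pos ht₀0 a
      exact mul_pos this hcon
    have hmono : MonotoneOn u (Ioc 0 t₀) := by
      apply monotoneOn_of_hasDerivWithinAt_nonneg (convex_Ioc 0 t₀)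
        (hucont.mono Ioc_subset_Ioi_self) (f' := deriv u)
      · intro τ hτ
        rw [interior_Ioc] at hτ
        exact (hu1 τ hτ.1).hasDerivWithinAt
      · intro τ hτ
        rw [interior_Ioc] at hτ
        have hva : v t₀ ≤ v τ := hvanti hτ.1 ht₀ hτ.2.le
        have hτa : 0 < τ ^ a := Real.rpow_pos_of_pos hτ.1 a
        simp only [hv_def] at hva hvpos
        have h2 : 0 < τ ^ a * deriv u τ := lt_of_lt_of_le hvpos hva
        rcases mul_pos_iff.mp h2 with ⟨_, h⟩ | ⟨h, _⟩
        · exact h.le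
        · linarith
    have hmem : Ioo (0:ℝ) t₀ ∈ 𝓝[>] (0:ℝ) := Ioo_mem_nhdsGT_of_mem ⟨le_refl 0, ht₀0⟩
    obtain ⟨r, hur, hr⟩ := ((hblow.eventually_gt_atTop (u t₀)).and
      (eventually_of_mem hmem (fun x hx => hx))).exists
    have : u r ≤ u t₀ := hmono ⟨hr.1, hr.2.le⟩ ⟨ht₀0, le_refl t₀⟩ hr.2.le
    linarith
  -- u is antitone
  have hanti : AntitoneOn u (Ioi 0) := by
    apply antitoneOn_of_hasDerivWithinAt_nonpos (convex_Ioi 0) hucont (f' := deriv u)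
    · intro τ hτ
      rw [interior_Ioi] at hτ
      exact (hu1 τ hτ).hasDerivWithinAt
    · intro τ hτ
      rw [interior_Ioi] at hτ
      exact hdunp τ hτ
  -- Step D
  have hD : ∀ t ∈ Ioi (0:ℝ),
      t ^ a * deriv u t ≤ -((t/2) ^ (a + l₂) * u t ^ q * (t/2)) := by
    intro t ht
    have ht0 : (0:ℝ) < t := ht
    have ht2 : (0:ℝ) < t/2 := by linarith
    set K : ℝ := (t/2) ^ (a + l₂) * u t ^ q with hK_def
    have hKpos : 0 < K := mul_pos (Real.rpow_pos_of_pos ht2 _)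
      (Real.rpow_pos_of_pos (hupos t ht0) q)
    have hganti : AntitoneOn (fun τ => v τ + K * τ) (Icc (t/2) t) := by
      apply antitoneOn_of_hasDerivWithinAt_nonpos (convex_Icc _ _)
        (f' := fun τ => V' τ + K)
      · apply ContinuousOn.add (hvcont.mono ?_) (continuousOn_const.mul continuousOn_id)
        intro τ hτ; exact lt_of_lt_of_le ht2 hτ.1
      · intro τ hτ
        rw [interior_Icc] at hτ
        have hτ0 : (0:ℝ) < τ := lt_trans ht2 hτ.1
        have := (hVd τ hτ0).add ((hasDerivAt_id τ).const_mul K)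
        rw [mul_one] at this
        exact this.hasDerivWithinAt
      · intro τ hτ
        rw [interior_Icc] at hτ
        have hτ0 : (0:ℝ) < τ := lt_trans ht2 hτ.1
        rw [hV'eq τ hτ0]
        have h1 : τ ^ l₂ * u τ ^ q ≤ τ ^ l₁ * u τ ^ p + τ ^ l₂ * u τ ^ q := by
          have : 0 < τ ^ l₁ * u τ ^ p :=
            mul_pos (Real.rpow_pos_of_pos hτ0 _) (Real.rpow_pos_of_pos (hupos τ hτ0) _)
          linarith
        have h2 : K ≤ τ ^ a * (τ ^ l₂ * u τ ^ q) := by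
          rw [← mul_assoc, ← Real.rpow_add hτ0]
          apply mul_le_mul
          · exact Real.rpow_le_rpow ht2.le hτ.1.le (by linarith)
          · exact Real.rpow_le_rpow (hupos t ht0).le
              (hanti hτ0 ht hτ.2.le) (by linarith)
          · exact (Real.rpow_pos_of_pos (hupos t ht0) q).le
          · exact (Real.rpow_pos_of_pos hτ0 _).le
        have h3 : τ ^ a * (τ ^ l₂ * u τ ^ q) ≤ τ ^ a * (τ ^ l₁ * u τ ^ p + τ ^ l₂ * u τ ^ q) := by
          apply mul_le_mul_of_nonneg_left h1 (Real.rpow_pos_of_pos hτ0 a).le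
        linarith
    have hmemL : t/2 ∈ Icc (t/2) t := ⟨le_refl _, by linarith⟩
    have hmemR : t ∈ Icc (t/2) t := ⟨by linarith, le_refl _⟩
    have h4 : v t + K * t ≤ v (t/2) + K * (t/2) := hganti hmemL hmemR (by linarith)
    have h5 : v (t/2) ≤ 0 := by
      have := hdunp (t/2) ht2
      have h6 : 0 < (t/2:ℝ) ^ a := Real.rpow_pos_of_pos ht2 a
      simp only [hv_def]
      exact mul_nonpos_of_nonneg_of_nonpos h6.le this
    simp only [hv_def] at h4 h5 ⊢
    nlinarith
  -- Step E : u t ^ (1 - q) ≥ c₁ * t ^ (2 + l₂)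
  set c₁ : ℝ := (q - 1) / (4 * 2 ^ ((n:ℝ) + l₂)) with hc₁_def
  have hc₁pos : 0 < c₁ := by
    apply div_pos hq0
    positivity
  have hE : ∀ t ∈ Ioi (0:ℝ), c₁ * t ^ (2 + l₂) ≤ u t ^ (1 - q) := by
    intro t ht
    have ht0 : (0:ℝ) < t := ht
    have ht2 : (0:ℝ) < t/2 := by linarith
    set M : ℝ := (q - 1) * ((t ^ (1 + l₂) / 2) / 2 ^ ((n:ℝ) + l₂)) with hM_def
    have hMpos : 0 < M := by
      apply mul_pos hq0
      have := Real.rpow_pos_of_pos ht0 (1 + l₂)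
      positivity
    have hmono : MonotoneOn (fun τ => u τ ^ (1 - q) - M * τ) (Icc (t/2) t) := by
      apply monotoneOn_of_hasDerivWithinAt_nonneg (convex_Icc _ _)
        (f' := fun τ => deriv u τ * (1 - q) * u τ ^ (1 - q - 1) - M)
      · apply ContinuousOn.sub _ (continuousOn_const.mul continuousOn_id)
        apply ContinuousOn.rpow_const (hucont.mono ?_)
        · intro τ hτ
          exact Or.inl (ne_of_gt (hupos τ (by simp at hτ ⊢; linarith [hτ.1])))
        · intro τ hτ; exact lt_of_lt_of_le ht2 hτ.1
      · intro τ hτ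
        rw [interior_Icc] at hτ
        have hτ0 : (0:ℝ) < τ := lt_trans ht2 hτ.1
        have h1 := ((hu1 τ hτ0).rpow_const (p := 1 - q) (Or.inl (ne_of_gt (hupos τ hτ0)))).sub
          ((hasDerivAt_id τ).const_mul M)
        rw [mul_one] at h1
        exact h1.hasDerivWithinAt
      · intro τ hτ
        rw [interior_Icc] at hτ
        have hτ0 : (0:ℝ) < τ := lt_trans ht2 hτ.1
        have hτ2 : (0:ℝ) < τ/2 := by linarith
        have huτ : 0 < u τ := hupos τ hτ0
        -- from step D
        have hd := hD τ hτ0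
        have hτa : 0 < τ ^ a := Real.rpow_pos_of_pos hτ0 a
        have hPi : 0 < u τ ^ (-q) := Real.rpow_pos_of_pos huτ _
        have hPPi : u τ ^ q * u τ ^ (-q) = 1 := by
          rw [← Real.rpow_add huτ]; simp
        have hstep : -deriv u τ ≥ (τ/2) ^ (a + l₂) * u τ ^ q * (τ/2) / τ ^ a := by
          rw [ge_iff_le, div_le_iff₀ hτa]
          linarith [hd]
        have hkey : (q - 1) * (-deriv u τ) * u τ ^ (-q) ≥ M := by
          have h6 : (q - 1) * (-deriv u τ) * u τ ^ (-q) ≥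
              (q - 1) * ((τ/2) ^ (a + l₂) * u τ ^ q * (τ/2) / τ ^ a) * u τ ^ (-q) := by
            apply mul_le_mul_of_nonneg_right _ hPi.le
            apply mul_le_mul_of_nonneg_left hstep (by linarith)
          have h7 : (q - 1) * ((τ/2) ^ (a + l₂) * u τ ^ q * (τ/2) / τ ^ a) * u τ ^ (-q)
              = (q - 1) * ((τ/2) ^ (a + l₂) * (τ/2) / τ ^ a) * (u τ ^ q * u τ ^ (-q)) := by
            ring
          rw [h7, hPPi, mul_one] at h6
          refine le_trans ?_ h6
          have h8 : (τ/2) ^ (a + l₂) * (τ/2) / τ ^ a = τ ^ (1 + l₂) / (2 ^ (a + l₂) * 2) := by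
            rw [Real.div_rpow hτ0.le (by norm_num : (0:ℝ) ≤ 2), Real.rpow_add hτ0 a l₂,
              Real.rpow_add hτ0 1 l₂, Real.rpow_one]
            field_simp
          rw [h8]
          have h9 : t ^ (1 + l₂) / 2 ≤ τ ^ (1 + l₂) := by
            rw [Real.rpow_add hτ0 1 l₂, Real.rpow_add ht0 1 l₂, Real.rpow_one, Real.rpow_one]
            have hA : t ^ l₂ ≤ τ ^ l₂ :=
              Real.rpow_le_rpow_of_nonpos hτ0 hτ.2.le (by linarith)
            have hB : 0 < t ^ l₂ := Real.rpow_pos_of_pos ht0 l₂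
            calc t * t ^ l₂ / 2 = (t/2) * t ^ l₂ := by ring
              _ ≤ τ * τ ^ l₂ := mul_le_mul hτ.1.le hA hB.le hτ0.le
          have h10 : (2:ℝ) ^ (a + l₂) * 2 = 2 ^ ((n:ℝ) + l₂) := by
            rw [show ((n:ℝ) + l₂) = (a + l₂) + 1 by simp only [ha_def]; ring,
              Real.rpow_add_one (by norm_num : (2:ℝ) ≠ 0)]
          rw [h10]
          simp only [hM_def]
          gcongr
        have h12 : 1 - q - 1 = -q := by ring
        rw [h12]
        have h13 : deriv u τ * (1 - q) * u τ ^ (-q)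
            = (q - 1) * (-deriv u τ) * u τ ^ (-q) := by ring
        linarith [h13, hkey]
    have hmemL : t/2 ∈ Icc (t/2) t := ⟨le_refl _, by linarith⟩
    have hmemR : t ∈ Icc (t/2) t := ⟨by linarith, le_refl _⟩
    have h13 := hmono hmemL hmemR (by linarith)
    simp only at h13
    have h14 : 0 < u (t/2) ^ (1 - q) := Real.rpow_pos_of_pos (hupos _ ht2) _
    have h15 : M * t / 2 ≤ u t ^ (1 - q) := by
      have hMeq : M * (t/2) = M * t / 2 := by ring
      linarith
    have h16 : c₁ * t ^ (2 + l₂) = M * t / 2 := by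
      have h17 : (0:ℝ) < 2 ^ ((n:ℝ) + l₂) := by positivity
      simp only [hM_def, hc₁_def]
      rw [show (2:ℝ) + l₂ = (1 + l₂) + 1 by ring, Real.rpow_add_one (ne_of_gt ht0)]
      field_simp
      ring
    linarith
  -- conclusion
  refine ⟨c₁ ^ (-(1:ℝ) / (q - 1)), Real.rpow_pos_of_pos hc₁pos _, 1, one_pos, ?_⟩
  intro r hr _
  have hur : 0 < u r := hupos r hr
  have hBpos : 0 < c₁ * r ^ (2 + l₂) := mul_pos hc₁pos (Real.rpow_pos_of_pos hr _)
  have he : -(1:ℝ)/(q-1) ≤ 0 := div_nonpos_of_nonpos_of_nonneg (by norm_num) hq0.le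
  have h := Real.rpow_le_rpow_of_nonpos hBpos (hE r hr) he
  have hlhs : (u r ^ (1 - q)) ^ (-(1:ℝ)/(q-1)) = u r := by
    rw [← Real.rpow_mul hur.le, show (1 - q) * (-(1:ℝ)/(q-1)) = 1 by
      field_simp; ring, Real.rpow_one]
  have hrhs : (c₁ * r ^ (2 + l₂)) ^ (-(1:ℝ)/(q-1))
      = c₁ ^ (-(1:ℝ)/(q-1)) * r ^ (-(2 + l₂)/(q-1)) := by
    rw [Real.mul_rpow hc₁pos.le (Real.rpow_pos_of_pos hr _).le, ← Real.rpow_mul hr.le]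
    congr 1
    ring
  rw [hlhs, hrhs] at h
  exact h
end

section
/- Let $n\ge 3$, $-2<l_2<l_1\le 0$, $1<p<q$, and let $u:(0,\infty)\to(0,\infty)$ be a $C^2$ solution of $u''+\frac{n-1}{r}u'+r^{l_1}u^p+r^{l_2}u^q=0$. If $u(r)\to 0$ as $r\to\infty$, then there exist $C>0$ and $R>0$ such that $u(r)\le C\, r^{-\frac{2+l_1}{p-1}}$ for all $r>R$. -/
open Filter Topology Set

set_option maxHeartbeats 1000000 in
theorem stmt_1 (n : ℕ) (hn : 3 ≤ n) (l₁ l₂ p q : ℝ)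
    (hl₂ : -2 < l₂) (hl : l₂ < l₁) (hl₁ : l₁ ≤ 0) (hp : 1 < p) (hpq : p < q)
    (u : ℝ → ℝ) (hupos : ∀ r > 0, 0 < u r)
    (hC2 : ContDiffOn ℝ 2 u (Set.Ioi 0))
    (hode : ∀ r > 0, deriv (deriv u) r + ((n : ℝ) - 1) / r * deriv u r
      + r ^ l₁ * u r ^ p + r ^ l₂ * u r ^ q = 0)
    (hdecay : Tendsto u atTop (𝓝 0)) :
    ∃ C > 0, ∃ R > 0, ∀ r, R < r →
      u r ≤ C * r ^ (-(2 + l₁) / (p - 1)) := by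
  have hn3 : (3:ℝ) ≤ (n:ℝ) := by exact_mod_cast hn
  set a : ℝ := (n:ℝ) - 1 with ha
  have ha2 : (2:ℝ) ≤ a := by simp only [ha]; linarith
  have hl₁' : -2 < l₁ := lt_trans hl₂ hl
  have hopen : IsOpen (Ioi (0:ℝ)) := isOpen_Ioi
  have hucont : ContinuousOn u (Ioi 0) := hC2.continuousOn
  have hudiff : DifferentiableOn ℝ u (Ioi 0) := hC2.differentiableOn (by norm_num)
  have hd1 : ContDiffOn ℝ 1 (deriv u) (Ioi 0) :=
    hC2.deriv_of_isOpen hopen (by norm_num)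
  have hu'cont : ContinuousOn (deriv u) (Ioi 0) := hd1.continuousOn
  have hu' : ∀ r ∈ Ioi (0:ℝ), HasDerivAt u (deriv u r) r := fun r hr =>
    ((hudiff).differentiableAt (hopen.mem_nhds hr)).hasDerivAt
  have hu'' : ∀ r ∈ Ioi (0:ℝ), HasDerivAt (deriv u) (deriv (deriv u) r) r := fun r hr =>
    ((hd1.differentiableOn one_ne_zero).differentiableAt (hopen.mem_nhds hr)).hasDerivAt
  set F : ℝ → ℝ := fun r => r ^ l₁ * u r ^ p + r ^ l₂ * u r ^ q with hF
  have hFpos : ∀ r > (0:ℝ), 0 < F r := by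
    intro r hr
    have h1 : 0 < r ^ l₁ := Real.rpow_pos_of_pos hr _
    have h2 : 0 < r ^ l₂ := Real.rpow_pos_of_pos hr _
    have h3 : 0 < u r ^ p := Real.rpow_pos_of_pos (hupos r hr) _
    have h4 : 0 < u r ^ q := Real.rpow_pos_of_pos (hupos r hr) _
    positivity
  set v : ℝ → ℝ := fun r => r ^ a * deriv u r with hvdef
  have hv : ∀ r ∈ Ioi (0:ℝ), HasDerivAt v (-(r ^ a * F r)) r := by
    intro r hr
    have hr0 : (0:ℝ) < r := hr
    have h1 : HasDerivAt (fun x : ℝ => x ^ a) (a * r ^ (a - 1)) r :=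
      Real.hasDerivAt_rpow_const (Or.inl hr0.ne')
    have h2 : HasDerivAt v (a * r ^ (a - 1) * deriv u r + r ^ a * deriv (deriv u) r) r :=
      (h1.mul (hu'' r hr))
    have hode' : deriv (deriv u) r = -(a / r * deriv u r + F r) := by
      have := hode r hr0
      simp only [hF, ha]
      linarith
    convert h2 using 1
    rw [hode']
    have hsub : r ^ (a - 1) = r ^ a / r := Real.rpow_sub_one hr0.ne' a
    rw [hsub]
    field_simp [hsub]
    ring
  have hvcont : ContinuousOn v (Ioi 0) := by
    rw [hvdef]
    exact ContinuousOn.mul (fun r hr =>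
      (Real.continuousAt_rpow_const r a (Or.inl (ne_of_gt hr))).continuousWithinAt) hu'cont
  have hvanti : StrictAntiOn v (Ioi 0) := by
    apply strictAntiOn_of_deriv_neg (convex_Ioi 0) hvcont
    intro x hx
    rw [interior_Ioi] at hx
    rw [(hv x hx).deriv]
    have := hFpos x hx
    have hxa : 0 < x ^ a := Real.rpow_pos_of_pos hx _
    nlinarith
  -- there is a point where v is negative
  obtain ⟨r₀, hr₀, hvr₀⟩ : ∃ r₀ > (0:ℝ), v r₀ < 0 := by
    by_contra hcon
    push_neg at hcon
    have hu'nn : ∀ r ∈ interior (Ioi (0:ℝ)), 0 ≤ deriv u r := by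
      intro r hr
      rw [interior_Ioi] at hr
      have h1 := hcon r hr
      have hra : (0:ℝ) < r ^ a := Real.rpow_pos_of_pos hr _
      rw [hvdef] at h1
      simp only at h1
      nlinarith
    have hmono : MonotoneOn u (Ioi 0) :=
      monotoneOn_of_deriv_nonneg (convex_Ioi 0) hucont
        (fun x hx => (hudiff x (interior_subset hx)).mono interior_subset) hu'nn
    have hle : ∀ᶠ r in atTop, u 1 ≤ u r := by
      filter_upwards [eventually_ge_atTop (1:ℝ)] with r hr
      exact hmono (by norm_num) (by simp; linarith) hr
    have := ge_of_tendsto hdecay hle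
    have := hupos 1 (by norm_num)
    linarith
  have hvneg : ∀ s, r₀ < s → v s < 0 := fun s hs =>
    lt_trans (hvanti (mem_Ioi.2 hr₀) (mem_Ioi.2 (lt_trans hr₀ hs)) hs) hvr₀
  have hu'neg : ∀ s, r₀ < s → deriv u s < 0 := by
    intro s hs
    have h1 := hvneg s hs
    have hsa : (0:ℝ) < s ^ a := Real.rpow_pos_of_pos (lt_trans hr₀ hs) _
    rw [hvdef] at h1; simp only at h1
    nlinarith
  have huanti : AntitoneOn u (Ici r₀) := by
    apply antitoneOn_of_deriv_nonpos (convex_Ici r₀)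
      (hucont.mono (fun x hx => lt_of_lt_of_le hr₀ hx))
      (fun x hx => (hudiff x (by rw [interior_Ici] at hx; exact mem_Ioi.2 (lt_trans hr₀ hx))).mono
        (fun y hy => lt_of_le_of_lt (le_of_lt hr₀) (by rw [interior_Ici] at *; exact hy)))
    intro x hx
    rw [interior_Ici] at hx
    exact le_of_lt (hu'neg x hx)
  -- Step A
  have stepA : ∀ ρ, r₀ < ρ → (-(v ρ)) * ρ ≤ u ρ * (2*ρ) ^ a := by
    intro ρ hρ
    have hρ0 : 0 < ρ := lt_trans hr₀ hρ
    have h2ρ : ρ < 2*ρ := by linarith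
    have hsub : Icc ρ (2*ρ) ⊆ Ioi (0:ℝ) := fun x hx => lt_of_lt_of_le hρ0 hx.1
    obtain ⟨η, hη, hηeq⟩ := exists_hasDerivAt_eq_slope u (deriv u) h2ρ
      (hucont.mono hsub) (fun x hx => hu' x (hsub (Ioo_subset_Icc_self hx)))
    have hη0 : 0 < η := lt_trans hρ0 hη.1
    have hηr₀ : r₀ < η := lt_trans hρ hη.1
    have heq : deriv u η * ρ = u (2*ρ) - u ρ := by
      rw [hηeq, show 2*ρ - ρ = ρ from by ring, div_mul_cancel₀ _ (ne_of_gt hρ0)]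
    have hvη : -(v η) ≥ -(v ρ) := by
      have := hvanti (mem_Ioi.2 hρ0) (mem_Ioi.2 hη0) hη.1
      linarith
    have hηa : (0:ℝ) < η ^ a := Real.rpow_pos_of_pos hη0 _
    have h2ρa : (0:ℝ) < (2*ρ) ^ a := Real.rpow_pos_of_pos (by linarith) _
    have hle : η ^ a ≤ (2*ρ) ^ a :=
      Real.rpow_le_rpow (le_of_lt hη0) (le_of_lt hη.2) (by linarith)
    have hderivη : -(deriv u η) = (-(v η)) / η ^ a := by
      rw [hvdef]; field_simp
    have hvρpos : 0 < -(v ρ) := by have := hvneg ρ hρ; linarith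
    have hkey : (-(v ρ)) / (2*ρ) ^ a ≤ -(deriv u η) := by
      rw [hderivη]
      exact div_le_div₀ (by linarith) hvη hηa hle
    have hu2ρ : 0 < u (2*ρ) := hupos _ (by linarith)
    have : (-(v ρ)) / (2*ρ) ^ a * ρ ≤ u ρ := by
      have h3 : -(deriv u η) * ρ = u ρ - u (2*ρ) := by linarith [heq]
      nlinarith [hkey]
    rw [div_mul_eq_mul_div, div_le_iff₀ h2ρa] at this
    linarith
  -- Step B
  have stepB : ∀ ρ, r₀ < ρ → ρ ^ (a + l₁ + 1) * u (2*ρ) ^ p ≤ -(v (2*ρ)) := by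
    intro ρ hρ
    have hρ0 : 0 < ρ := lt_trans hr₀ hρ
    have h2ρ : ρ < 2*ρ := by linarith
    have hsub : Icc ρ (2*ρ) ⊆ Ioi (0:ℝ) := fun x hx => lt_of_lt_of_le hρ0 hx.1
    obtain ⟨ξ, hξ, hξeq⟩ := exists_hasDerivAt_eq_slope v (fun x => -(x ^ a * F x)) h2ρ
      (hvcont.mono hsub) (fun x hx => hv x (hsub (Ioo_subset_Icc_self hx)))
    have hξ0 : 0 < ξ := lt_trans hρ0 hξ.1
    have heq : v ρ - v (2*ρ) = ξ ^ a * F ξ * ρ := by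
      have h1 := hξeq
      rw [eq_div_iff (by linarith : 2*ρ - ρ ≠ 0)] at h1
      linear_combination h1
    have hvρneg : v ρ < 0 := hvneg ρ hρ
    have h1 : ξ ^ a * F ξ * ρ ≤ -(v (2*ρ)) := by linarith
    have hFξ : ξ ^ l₁ * u ξ ^ p ≤ F ξ := by
      simp only [hF]
      have h2 : 0 < ξ ^ l₂ := Real.rpow_pos_of_pos hξ0 _
      have h3 : 0 < u ξ ^ q := Real.rpow_pos_of_pos (hupos ξ hξ0) _
      nlinarith
    have hcomb : ξ ^ (a + l₁) = ξ ^ a * ξ ^ l₁ := Real.rpow_add hξ0 _ _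
    have hmono1 : ρ ^ (a + l₁) ≤ ξ ^ (a + l₁) :=
      Real.rpow_le_rpow (le_of_lt hρ0) (le_of_lt hξ.1) (by linarith)
    have hmono2 : u (2*ρ) ^ p ≤ u ξ ^ p := by
      apply Real.rpow_le_rpow (le_of_lt (hupos _ (by linarith)))
        (huanti (mem_Ici.2 (le_of_lt (lt_trans hρ hξ.1))) (mem_Ici.2 (by linarith)) (le_of_lt hξ.2))
        (by linarith)
    have hsplit : ρ ^ (a + l₁ + 1) = ρ ^ (a + l₁) * ρ := by
      rw [Real.rpow_add_one (ne_of_gt hρ0)]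
    have hξa : 0 < ξ ^ a := Real.rpow_pos_of_pos hξ0 _
    have hξl : 0 < ξ ^ l₁ := Real.rpow_pos_of_pos hξ0 _
    have hup : 0 < u (2*ρ) ^ p := Real.rpow_pos_of_pos (hupos _ (by linarith)) _
    have hρal : 0 < ρ ^ (a + l₁) := Real.rpow_pos_of_pos hρ0 _
    calc ρ ^ (a + l₁ + 1) * u (2*ρ) ^ p = ρ ^ (a + l₁) * u (2*ρ) ^ p * ρ := by
          rw [hsplit]; ring
      _ ≤ ξ ^ (a + l₁) * u ξ ^ p * ρ := by
          have hup' : 0 < u ξ ^ p := Real.rpow_pos_of_pos (hupos ξ hξ0) _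
          exact mul_le_mul_of_nonneg_right
            (mul_le_mul hmono1 hmono2 (le_of_lt hup) (le_of_lt (lt_of_lt_of_le hρal hmono1)))
            (le_of_lt hρ0)
      _ = ξ ^ a * (ξ ^ l₁ * u ξ ^ p) * ρ := by rw [hcomb]; ring
      _ ≤ ξ ^ a * F ξ * ρ :=
          mul_le_mul_of_nonneg_right (mul_le_mul_of_nonneg_left hFξ (le_of_lt hξa)) (le_of_lt hρ0)
      _ ≤ -(v (2*ρ)) := h1
  -- combine
  set K : ℝ := (4:ℝ) ^ (a + 1) with hK
  have hKpos : 0 < K := Real.rpow_pos_of_pos (by norm_num) _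
  have hkey : ∀ ρ, r₀ < ρ → u (2*ρ) ^ (p - 1) ≤ K * (2*ρ) ^ (-(2 + l₁)) := by
    intro ρ hρ
    have hρ0 : 0 < ρ := lt_trans hr₀ hρ
    set U := u (2*ρ) with hUdef
    have hU : 0 < U := hupos _ (by linarith)
    have hA := stepA (2*ρ) (by linarith)
    have hB := stepB ρ hρ
    have h1 : ρ ^ (a + l₁ + 1) * U ^ p * (2*ρ) ≤ (-(v (2*ρ))) * (2*ρ) :=
      mul_le_mul_of_nonneg_right hB (by linarith)
    have h2 : ρ ^ (a + l₁ + 1) * U ^ p * (2*ρ) ≤ U * (2*(2*ρ)) ^ a := le_trans h1 hA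
    have h4a : (2*(2*ρ) :ℝ) ^ a = 4 ^ a * ρ ^ a := by
      rw [show (2*(2*ρ) :ℝ) = 4 * ρ by ring, Real.mul_rpow (by norm_num) (le_of_lt hρ0)]
    have hUp : U ^ p = U ^ (p-1) * U := by
      rw [← Real.rpow_add_one (ne_of_gt hU) (p-1)]; norm_num
    have hsplit : ρ ^ (a + l₁ + 1) * ρ = ρ ^ (a + l₁ + 2) := by
      rw [← Real.rpow_add_one (ne_of_gt hρ0) (a+l₁+1)]
      congr 1; ring
    have h3 : 2 * ρ ^ (a + l₁ + 2) * U ^ (p-1) * U ≤ 4 ^ a * ρ ^ a * U := by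
      calc 2 * ρ ^ (a + l₁ + 2) * U ^ (p-1) * U
          = ρ ^ (a + l₁ + 1) * U ^ p * (2*ρ) := by rw [hUp, ← hsplit]; ring
        _ ≤ U * (2*(2*ρ)) ^ a := h2
        _ = 4 ^ a * ρ ^ a * U := by rw [h4a]; ring
    have h4 : 2 * ρ ^ (a + l₁ + 2) * U ^ (p-1) ≤ 4 ^ a * ρ ^ a :=
      le_of_mul_le_mul_right h3 hU
    have hρ2 : 0 < ρ ^ (a + l₁ + 2) := Real.rpow_pos_of_pos hρ0 _
    have h5 : U ^ (p-1) ≤ 4 ^ a * ρ ^ a / (2 * ρ ^ (a + l₁ + 2)) := by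
      rw [le_div_iff₀ (by positivity)]
      nlinarith [h4]
    have h6 : ρ ^ a / ρ ^ (a + l₁ + 2) = ρ ^ (-(2+l₁)) := by
      rw [← Real.rpow_sub hρ0]; congr 1; ring
    have hone : (2:ℝ)^(2+l₁) * 2^(-(2+l₁)) = 1 := by
      rw [← Real.rpow_add (by norm_num : (0:ℝ) < 2), show (2+l₁) + -(2+l₁) = 0 by ring,
        Real.rpow_zero]
    have h7 : ρ ^ (-(2+l₁)) = 2 ^ (2+l₁) * (2*ρ) ^ (-(2+l₁)) := by
      rw [Real.mul_rpow (by norm_num) (le_of_lt hρ0), ← mul_assoc, hone, one_mul]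
    have h24 : (2:ℝ) ^ (2+l₁) ≤ 4 := by
      have := Real.rpow_le_rpow_of_exponent_le (one_le_two (α := ℝ)) (by linarith : 2+l₁ ≤ (2:ℝ))
      have h22 : (2:ℝ) ^ ((2:ℕ):ℝ) = 4 := by rw [Real.rpow_natCast]; norm_num
      rw [show ((2:ℕ):ℝ) = (2:ℝ) by norm_num] at h22
      linarith
    have hKeq : K = 4 ^ a * 4 := by rw [hK, Real.rpow_add_one (by norm_num : (4:ℝ) ≠ 0)]
    have h4apos : 0 < (4:ℝ) ^ a := Real.rpow_pos_of_pos (by norm_num) _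
    have h2ρe : 0 < (2*ρ) ^ (-(2+l₁)) := Real.rpow_pos_of_pos (by linarith) _
    have h2e : 0 < (2:ℝ) ^ (2+l₁) := Real.rpow_pos_of_pos (by norm_num) _
    calc U ^ (p-1) ≤ 4 ^ a * ρ ^ a / (2 * ρ ^ (a + l₁ + 2)) := h5
      _ = 4 ^ a / 2 * (ρ ^ a / ρ ^ (a + l₁ + 2)) := by ring
      _ = 4 ^ a / 2 * (2 ^ (2+l₁) * (2*ρ) ^ (-(2+l₁))) := by rw [h6, h7]
      _ ≤ K * (2*ρ) ^ (-(2 + l₁)) := by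
          rw [hKeq]
          nlinarith [mul_nonneg (mul_nonneg (le_of_lt h4apos) (sub_nonneg.2 h24)) (le_of_lt h2ρe),
            mul_nonneg (mul_nonneg (le_of_lt h4apos) (le_of_lt h2e)) (le_of_lt h2ρe)]
  refine ⟨K ^ (1/(p-1)), Real.rpow_pos_of_pos hKpos _, 2*r₀, by linarith, ?_⟩
  intro r hr
  have hrpos : (0:ℝ) < r := by linarith
  have hρ : r₀ < r/2 := by linarith
  have hur : 0 < u r := hupos r hrpos
  have hkr := hkey (r/2) hρ
  rw [show 2*(r/2) = r by ring] at hkr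
  have hexp : (p-1)*(1/(p-1)) = 1 := mul_one_div_cancel (by linarith : p - 1 ≠ 0)
  have h8 : (u r ^ (p-1)) ^ (1/(p-1)) = u r := by
    rw [← Real.rpow_mul (le_of_lt hur), hexp, Real.rpow_one]
  have hmono : (u r ^ (p-1)) ^ (1/(p-1)) ≤ (K * r ^ (-(2+l₁))) ^ (1/(p-1)) :=
    Real.rpow_le_rpow (Real.rpow_nonneg (le_of_lt hur) _) hkr
      (le_of_lt (one_div_pos.2 (by linarith)))
  rw [h8, Real.mul_rpow (le_of_lt hKpos) (Real.rpow_nonneg (le_of_lt hrpos) _),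
    ← Real.rpow_mul (le_of_lt hrpos)] at hmono
  rwa [show -(2+l₁)*(1/(p-1)) = -(2+l₁)/(p-1) by ring] at hmono
end

section
/- Let $u$ be a positive $C^2$ solution on $(0,\infty)$ of $u''+\frac{n-1}{r}u'+r^{l_1}u^p+r^{l_2}u^q=0$ with $n\ge 3$, $-2<l_2<l_1\le0$, $1<p<q$. Suppose $u(r)\le C_0 r^{-\frac{2+l_2}{q-1}}$ near $0$ and $u'<0$ near $0$. Then there exist $C>0$ and $\bar r>0$ such that $|u'(r)|\le C r^{-(\frac{2+l_2}{q-1}+1)}$ and $|u''(r)|\le C r^{-(\frac{2+l_2}{q-1}+2)}$ for all $0<r<\bar r$. -/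
open Filter Topology Set

set_option maxHeartbeats 1000000 in
theorem stmt_2 (n : ℕ) (hn : 3 ≤ n) (l₁ l₂ p q : ℝ)
    (hl₂ : -2 < l₂) (hl : l₂ < l₁) (hl₁ : l₁ ≤ 0) (hp : 1 < p) (hpq : p < q)
    (u : ℝ → ℝ) (hupos : ∀ r > 0, 0 < u r)
    (hC2 : ContDiffOn ℝ 2 u (Set.Ioi 0))
    (hode : ∀ r > 0, deriv (deriv u) r + ((n : ℝ) - 1) / r * deriv u r
      + r ^ l₁ * u r ^ p + r ^ l₂ * u r ^ q = 0)
    (C₀ r₀ : ℝ) (hC₀ : 0 < C₀) (hr₀ : 0 < r₀)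
    (hbound : ∀ r, 0 < r → r < r₀ → u r ≤ C₀ * r ^ (-(2 + l₂) / (q - 1)))
    (hdec : ∀ r, 0 < r → r < r₀ → deriv u r < 0) :
    ∃ C > 0, ∃ rb > 0, ∀ r, 0 < r → r < rb →
      |deriv u r| ≤ C * r ^ (-((2 + l₂) / (q - 1) + 1)) ∧
      |deriv (deriv u) r| ≤ C * r ^ (-((2 + l₂) / (q - 1) + 2)) := by
  have hq1 : 1 < q := hp.trans hpq
  have hqm : (0:ℝ) < q - 1 := by linarith
  set α : ℝ := (2 + l₂) / (q - 1) with hαdef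
  have hαpos : 0 < α := div_pos (by linarith) hqm
  -- differentiability
  have hd1 : DifferentiableOn ℝ u (Ioi 0) := hC2.differentiableOn (by norm_num)
  have hd2 : ContDiffOn ℝ 1 (deriv u) (Ioi 0) :=
    hC2.deriv_of_isOpen isOpen_Ioi (by norm_num)
  have hu'' : ∀ r ∈ Ioi (0:ℝ), HasDerivAt (deriv u) (deriv (deriv u) r) r :=
    fun r hr => ((hd2.differentiableOn one_ne_zero).differentiableAt
      (isOpen_Ioi.mem_nhds hr)).hasDerivAt
  -- positivity of the nonlinear terms
  have hApos : ∀ r : ℝ, 0 < r → 0 < r ^ l₁ * u r ^ p + r ^ l₂ * u r ^ q := by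
    intro r hr
    have h1 : 0 < r ^ l₁ * u r ^ p :=
      mul_pos (Real.rpow_pos_of_pos hr _) (Real.rpow_pos_of_pos (hupos r hr) _)
    have h2 : 0 < r ^ l₂ * u r ^ q :=
      mul_pos (Real.rpow_pos_of_pos hr _) (Real.rpow_pos_of_pos (hupos r hr) _)
    linarith
  -- g = r^(n-1) * u' and its derivative
  set g : ℝ → ℝ := fun r => r ^ (n-1) * deriv u r with hgdef
  have hg : ∀ r ∈ Ioi (0:ℝ), HasDerivAt g
      (((n-1:ℕ):ℝ) * r ^ (n-2) * deriv u r + r ^ (n-1) * deriv (deriv u) r) r := by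
    intro r hr
    have h := (hasDerivAt_pow (n-1) r).mul (hu'' r hr)
    have : n - 1 - 1 = n - 2 := by omega
    rw [this] at h
    exact h
  have hgneg : ∀ r ∈ Ioi (0:ℝ),
      ((n-1:ℕ):ℝ) * r ^ (n-2) * deriv u r + r ^ (n-1) * deriv (deriv u) r < 0 := by
    intro r hr
    rw [mem_Ioi] at hr
    have h := hode r hr
    have hc : ((n-1:ℕ):ℝ) = (n:ℝ) - 1 := by
      push_cast [Nat.cast_sub (by omega : 1 ≤ n)]; ring
    have hpow : r ^ (n-1) = r ^ (n-2) * r := by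
      rw [← pow_succ]; congr 1; omega
    have hD : deriv (deriv u) r =
        -(((n:ℝ) - 1) / r * deriv u r) - r ^ l₁ * u r ^ p - r ^ l₂ * u r ^ q := by
      linarith
    have hkey : ((n-1:ℕ):ℝ) * r ^ (n-2) * deriv u r + r ^ (n-1) * deriv (deriv u) r
        = -(r ^ (n-1) * (r ^ l₁ * u r ^ p + r ^ l₂ * u r ^ q)) := by
      rw [hD, hc, hpow]; field_simp; ring
    rw [hkey, neg_neg_iff_pos]
    exact mul_pos (pow_pos hr _) (hApos r hr)
  -- g is strictly decreasing on Ioo 0 r₀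
  have hganti : StrictAntiOn g (Ioo 0 r₀) := by
    apply strictAntiOn_of_deriv_neg (convex_Ioo 0 r₀)
    · exact fun x hx => ((hg x hx.1).continuousAt).continuousWithinAt
    · intro x hx
      rw [interior_Ioo] at hx
      rw [(hg x hx.1).deriv]
      exact hgneg x hx.1
  -- the constants
  set C₁ : ℝ := 2 ^ (n-1) * C₀ with hC₁def
  have hC₁pos : 0 < C₁ := mul_pos (pow_pos two_pos _) hC₀
  set C₂ : ℝ := ((n:ℝ) - 1) * C₁ + C₀ ^ p + C₀ ^ q with hC₂def
  have hC₂pos : 0 < C₂ := by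
    have h1 : (0:ℝ) < C₀ ^ p := Real.rpow_pos_of_pos hC₀ _
    have h2 : (0:ℝ) < C₀ ^ q := Real.rpow_pos_of_pos hC₀ _
    have h3 : (0:ℝ) < ((n:ℝ) - 1) * C₁ := by
      apply mul_pos _ hC₁pos
      have : (3:ℝ) ≤ n := by exact_mod_cast hn
      linarith
    linarith
  refine ⟨C₁ + C₂, by linarith, min r₀ 1 / 2, by positivity, ?_⟩
  intro r hr hrb
  have hr2 : 2 * r < r₀ := by
    have := min_le_left r₀ 1; linarith [hrb]
  have hrr₀ : r < r₀ := by linarith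
  have hr1 : r < 1 := by
    have := min_le_right r₀ 1; linarith [hrb]
  -- rpow algebra helpers
  have hrpow1 : r ^ (-(α + 1)) = r ^ (-α) / r := by
    rw [show -(α+1) = -α + (-1) by ring, Real.rpow_add hr, Real.rpow_neg_one,
      div_eq_mul_inv]
  have hrpow2 : r ^ (-(α + 2)) = r ^ (-(α+1)) / r := by
    rw [show -(α+2) = -(α+1) + (-1) by ring, Real.rpow_add hr, Real.rpow_neg_one,
      div_eq_mul_inv]
  have hbnd : u r ≤ C₀ * r ^ (-α) := by
    have := hbound r hr hrr₀
    rwa [neg_div] at this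
  -- Step 1 : bound on |u'|
  have hstep1 : |deriv u r| ≤ C₁ * r ^ (-(α + 1)) := by
    obtain ⟨c, hc, hslope⟩ := exists_deriv_eq_slope u (show r < 2*r by linarith)
      (hd1.continuousOn.mono (fun x hx => lt_of_lt_of_le hr hx.1))
      (hd1.mono (fun x hx => hr.trans hx.1))
    have hcpos : 0 < c := hr.trans hc.1
    have hcr₀ : c < r₀ := by linarith [hc.2]
    have hgc : g c < g r := hganti ⟨hr, hrr₀⟩ ⟨hcpos, hcr₀⟩ hc.1
    have hc' : deriv u c < 0 := hdec c hcpos hcr₀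
    have hr' : deriv u r < 0 := hdec r hr hrr₀
    -- c^(n-1) u'(c) < r^(n-1) u'(r), and c^(n-1) ≤ (2r)^(n-1)
    have hcle : c ^ (n-1) ≤ (2*r) ^ (n-1) :=
      pow_le_pow_left₀ hcpos.le (le_of_lt hc.2) _
    have h1 : (2*r) ^ (n-1) * deriv u c ≤ c ^ (n-1) * deriv u c := by
      apply mul_le_mul_of_nonpos_right hcle hc'.le
    have hgc' : c ^ (n-1) * deriv u c < r ^ (n-1) * deriv u r := hgc
    have h2 : (2*r) ^ (n-1) * deriv u c ≤ r ^ (n-1) * deriv u r :=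
      h1.trans hgc'.le
    have hexp : (2*r) ^ (n-1) = 2 ^ (n-1) * r ^ (n-1) := mul_pow 2 r (n-1)
    have h3 : 2 ^ (n-1) * deriv u c ≤ deriv u r := by
      have hrpos : (0:ℝ) < r ^ (n-1) := pow_pos hr _
      rw [hexp] at h2
      have h2' : (2 ^ (n-1) * deriv u c) * r ^ (n-1) ≤ deriv u r * r ^ (n-1) := by
        linarith [h2]
      exact le_of_mul_le_mul_right h2' hrpos
    -- slope identity
    have hslope' : deriv u c = (u (2*r) - u r) / r := by
      rw [hslope]; congr 1; ring
    have hu2r : 0 < u (2*r) := hupos _ (by linarith)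
    have h4 : 2 ^ (n-1) * (u (2*r) - u r) / r ≤ deriv u r := by
      rw [hslope'] at h3
      rw [mul_div_assoc]
      exact h3
    have h5 : -deriv u r ≤ 2 ^ (n-1) * u r / r := by
      have h2pow : (0:ℝ) ≤ 2 ^ (n-1) := by positivity
      rw [le_div_iff₀ hr]
      rw [div_le_iff₀ hr] at h4
      have e1 : (2:ℝ) ^ (n-1) * (u (2*r) - u r)
          = 2 ^ (n-1) * u (2*r) - 2 ^ (n-1) * u r := by ring
      have e2 : (0:ℝ) ≤ 2 ^ (n-1) * u (2*r) := mul_nonneg h2pow hu2r.le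
      linarith
    rw [abs_of_neg hr', hrpow1]
    calc -deriv u r ≤ 2 ^ (n-1) * u r / r := h5
      _ ≤ 2 ^ (n-1) * (C₀ * r ^ (-α)) / r := by
          gcongr
      _ = C₁ * (r ^ (-α) / r) := by rw [hC₁def]; ring
  -- Step 2 : bound on |u''|
  have hr' : deriv u r < 0 := hdec r hr hrr₀
  have hD : deriv (deriv u) r =
      -(((n:ℝ) - 1) / r * deriv u r) - r ^ l₁ * u r ^ p - r ^ l₂ * u r ^ q := by
    have := hode r hr; linarith
  have hn1 : (0:ℝ) ≤ (n:ℝ) - 1 := by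
    have : (3:ℝ) ≤ n := by exact_mod_cast hn
    linarith
  -- term bounds
  have hT1 : ((n:ℝ) - 1) / r * |deriv u r| ≤ ((n:ℝ)-1) * C₁ * r ^ (-(α+2)) := by
    rw [hrpow2]
    calc ((n:ℝ) - 1) / r * |deriv u r| ≤ ((n:ℝ)-1)/r * (C₁ * r ^ (-(α+1))) := by
          apply mul_le_mul_of_nonneg_left hstep1 (by positivity)
      _ = ((n:ℝ)-1) * C₁ * (r ^ (-(α+1)) / r) := by field_simp
  have huq : u r ^ q ≤ C₀ ^ q * r ^ ((-α) * q) := by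
    calc u r ^ q ≤ (C₀ * r ^ (-α)) ^ q :=
          Real.rpow_le_rpow (hupos r hr).le hbnd (by linarith)
      _ = C₀ ^ q * r ^ ((-α) * q) := by
          rw [Real.mul_rpow hC₀.le (Real.rpow_nonneg hr.le _),
            ← Real.rpow_mul hr.le]
  have hup : u r ^ p ≤ C₀ ^ p * r ^ ((-α) * p) := by
    calc u r ^ p ≤ (C₀ * r ^ (-α)) ^ p :=
          Real.rpow_le_rpow (hupos r hr).le hbnd (by linarith)
      _ = C₀ ^ p * r ^ ((-α) * p) := by
          rw [Real.mul_rpow hC₀.le (Real.rpow_nonneg hr.le _),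
            ← Real.rpow_mul hr.le]
  have hT3 : r ^ l₂ * u r ^ q ≤ C₀ ^ q * r ^ (-(α+2)) := by
    have hexp : l₂ + (-α) * q = -(α+2) := by
      rw [hαdef]; field_simp; ring
    calc r ^ l₂ * u r ^ q ≤ r ^ l₂ * (C₀ ^ q * r ^ ((-α) * q)) := by
          apply mul_le_mul_of_nonneg_left huq (Real.rpow_nonneg hr.le _)
      _ = C₀ ^ q * r ^ (l₂ + (-α) * q) := by
          rw [Real.rpow_add hr]; ring
      _ = C₀ ^ q * r ^ (-(α+2)) := by rw [hexp]
  have hT2 : r ^ l₁ * u r ^ p ≤ C₀ ^ p * r ^ (-(α+2)) := by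
    have hexp : -(α+2) ≤ l₁ + (-α) * p := by
      have h1 : α * (p-1) ≤ l₁ + 2 := by
        rw [hαdef, div_mul_eq_mul_div, div_le_iff₀ hqm]
        nlinarith [mul_nonneg (show (0:ℝ) ≤ 2 + l₂ by linarith)
            (show (0:ℝ) ≤ q - p by linarith),
          mul_nonneg (show (0:ℝ) ≤ l₁ - l₂ by linarith) hqm.le]
      have e : α * (p-1) = α * p - α := by ring
      have e2 : (-α) * p = -(α * p) := by ring
      linarith
    calc r ^ l₁ * u r ^ p ≤ r ^ l₁ * (C₀ ^ p * r ^ ((-α) * p)) := by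
          apply mul_le_mul_of_nonneg_left hup (Real.rpow_nonneg hr.le _)
      _ = C₀ ^ p * r ^ (l₁ + (-α) * p) := by
          rw [Real.rpow_add hr]; ring
      _ ≤ C₀ ^ p * r ^ (-(α+2)) := by
          apply mul_le_mul_of_nonneg_left _ (Real.rpow_nonneg hC₀.le _)
          exact Real.rpow_le_rpow_of_exponent_ge hr hr1.le hexp
  have hstep2 : |deriv (deriv u) r| ≤ C₂ * r ^ (-(α + 2)) := by
    have habs : |deriv (deriv u) r| ≤
        ((n:ℝ) - 1) / r * |deriv u r| + r ^ l₁ * u r ^ p + r ^ l₂ * u r ^ q := by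
      rw [hD]
      have h1 : (0:ℝ) < r ^ l₁ * u r ^ p :=
        mul_pos (Real.rpow_pos_of_pos hr _) (Real.rpow_pos_of_pos (hupos r hr) _)
      have h2 : (0:ℝ) < r ^ l₂ * u r ^ q :=
        mul_pos (Real.rpow_pos_of_pos hr _) (Real.rpow_pos_of_pos (hupos r hr) _)
      have h3 : |(((n:ℝ) - 1) / r * deriv u r)| = ((n:ℝ)-1)/r * |deriv u r| := by
        rw [abs_mul, abs_of_nonneg (by positivity : (0:ℝ) ≤ ((n:ℝ)-1)/r)]
      calc |(-(((n:ℝ) - 1) / r * deriv u r) - r ^ l₁ * u r ^ p - r ^ l₂ * u r ^ q)|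
          ≤ |(((n:ℝ) - 1) / r * deriv u r)| + r ^ l₁ * u r ^ p + r ^ l₂ * u r ^ q := by
            have := abs_sub (-(((n:ℝ) - 1) / r * deriv u r) - r ^ l₁ * u r ^ p)
              (r ^ l₂ * u r ^ q)
            have := abs_sub (-(((n:ℝ) - 1) / r * deriv u r)) (r ^ l₁ * u r ^ p)
            rw [abs_neg] at *
            calc |(-(((n:ℝ) - 1) / r * deriv u r) - r ^ l₁ * u r ^ p - r ^ l₂ * u r ^ q)|
                ≤ |(-(((n:ℝ) - 1) / r * deriv u r) - r ^ l₁ * u r ^ p)| + |r ^ l₂ * u r ^ q| :=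
                  abs_sub _ _
              _ ≤ |(((n:ℝ) - 1) / r * deriv u r)| + |r ^ l₁ * u r ^ p| + |r ^ l₂ * u r ^ q| := by
                  have := abs_sub (-(((n:ℝ) - 1) / r * deriv u r)) (r ^ l₁ * u r ^ p)
                  rw [abs_neg] at this
                  linarith
              _ = |(((n:ℝ) - 1) / r * deriv u r)| + r ^ l₁ * u r ^ p + r ^ l₂ * u r ^ q := by
                  rw [abs_of_pos h1, abs_of_pos h2]
        _ = ((n:ℝ)-1)/r * |deriv u r| + r ^ l₁ * u r ^ p + r ^ l₂ * u r ^ q := by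
            rw [h3]
    calc |deriv (deriv u) r| ≤
        ((n:ℝ) - 1) / r * |deriv u r| + r ^ l₁ * u r ^ p + r ^ l₂ * u r ^ q := habs
      _ ≤ ((n:ℝ)-1) * C₁ * r ^ (-(α+2)) + C₀ ^ p * r ^ (-(α+2)) + C₀ ^ q * r ^ (-(α+2)) := by
          linarith [hT1, hT2, hT3]
      _ = C₂ * r ^ (-(α+2)) := by rw [hC₂def]; ring
  constructor
  · have he : -((2 + l₂) / (q - 1) + 1) = -(α + 1) := by rw [hαdef]
    rw [he]
    have hrp : (0:ℝ) < r ^ (-(α+1)) := Real.rpow_pos_of_pos hr _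
    have e : (C₁ + C₂) * r ^ (-(α+1)) = C₁ * r ^ (-(α+1)) + C₂ * r ^ (-(α+1)) := by
      ring
    have e2 : (0:ℝ) ≤ C₂ * r ^ (-(α+1)) := mul_nonneg hC₂pos.le hrp.le
    linarith [hstep1]
  · have he : -((2 + l₂) / (q - 1) + 2) = -(α + 2) := by rw [hαdef]
    rw [he]
    have hrp : (0:ℝ) < r ^ (-(α+2)) := Real.rpow_pos_of_pos hr _
    have e : (C₁ + C₂) * r ^ (-(α+2)) = C₁ * r ^ (-(α+2)) + C₂ * r ^ (-(α+2)) := by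
      ring
    have e2 : (0:ℝ) ≤ C₁ * r ^ (-(α+2)) := mul_nonneg hC₁pos.le hrp.le
    linarith [hstep2]
end

section
/- Let $v:(R,\infty)\to\mathbb{R}$ be $C^1$ with $|v'(r)|\le C/r$ and $|v''(r)|\le C/r^2$ for all $r>R$ (where $C,R>0$). If $\int_R^{\infty} r\, v'(r)^2\,dr<\infty$, then $\lim_{r\to\infty} r\,v'(r)=0$. -/
open Filter Topology Set MeasureTheory

theorem stmt_4 (C R : ℝ) (hC : 0 < C) (hR : 0 < R) (v : ℝ → ℝ)
    (hC1 : ∀ r ∈ Set.Ioi R, DifferentiableAt ℝ v r ∧ DifferentiableAt ℝ (deriv v) r)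
    (hd1 : ∀ r ∈ Set.Ioi R, |deriv v r| ≤ C / r)
    (hd2 : ∀ r ∈ Set.Ioi R, |deriv (deriv v) r| ≤ C / r ^ 2)
    (hint : IntegrableOn (fun r => r * (deriv v r) ^ 2) (Set.Ioi R)) :
    Tendsto (fun r => r * deriv v r) atTop (𝓝 0) := by
  set f : ℝ → ℝ := fun r => r * (deriv v r) ^ 2 with hfdef
  set g : ℝ → ℝ := fun r => r * deriv v r with hgdef
  rw [Metric.tendsto_atTop]
  intro ε hε
  set δ : ℝ := ε / (4 * C) with hδdef
  have hδ : 0 < δ := by positivity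
  set c : ℝ := ε ^ 2 * δ / (4 * (1 + δ)) with hcdef
  have hc : 0 < c := by positivity
  -- tail integrals become small
  have htt := MeasureTheory.intervalIntegral_tendsto_integral_Ioi R hint tendsto_id
  have hev : ∀ᶠ b in atTop, (∫ x in Set.Ioi R, f x) - (∫ x in R..b, f x) < c := by
    have h0 : Tendsto (fun b => (∫ x in Set.Ioi R, f x) - (∫ x in R..b, f x)) atTop (𝓝 0) := by
      simpa using htt.const_sub (∫ x in Set.Ioi R, f x)
    exact h0.eventually_lt_const hc
  obtain ⟨N, hNc, hNR⟩ := (hev.and (eventually_gt_atTop R)).exists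
  have hN0 : 0 < N := hR.trans hNR
  have hNtail : ∫ t in Set.Ioi N, f t < c := by
    have hsplit : (∫ x in Set.Ioi R, f x)
        = (∫ x in Set.Ioc R N, f x) + ∫ x in Set.Ioi N, f x := by
      rw [← MeasureTheory.setIntegral_union (Set.Ioc_disjoint_Ioi le_rfl) measurableSet_Ioi
          (hint.mono_set Set.Ioc_subset_Ioi_self) (hint.mono_set (Set.Ioi_subset_Ioi hNR.le)),
          Set.Ioc_union_Ioi_eq_Ioi hNR.le]
    rw [intervalIntegral.integral_of_le hNR.le] at hNc
    linarith
  refine ⟨N, fun r hrN => ?_⟩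
  rw [Real.dist_eq, sub_zero]
  by_contra hcon
  push_neg at hcon
  have hrR : R < r := hNR.trans_le hrN
  have hr0 : 0 < r := hR.trans hrR
  set r1 : ℝ := (1 + δ) * r with hr1def
  have hrr1 : r < r1 := by nlinarith
  -- derivative of g and its bound
  have hderiv : ∀ t ∈ Set.Icc r r1,
      HasDerivWithinAt g (deriv v t + t * deriv (deriv v) t) (Set.Icc r r1) t := by
    intro t ht
    have htR : R < t := hrR.trans_le ht.1
    have h := (hasDerivAt_id t).mul ((hC1 t htR).2.hasDerivAt)
    exact h.hasDerivWithinAt.congr_deriv (by simp)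
  have hbound : ∀ t ∈ Set.Ico r r1, ‖deriv v t + t * deriv (deriv v) t‖ ≤ 2 * C / r := by
    intro t ht
    have htR : R < t := hrR.trans_le ht.1
    have ht0 : 0 < t := hR.trans htR
    have h1 := hd1 t htR
    have h2 := hd2 t htR
    rw [Real.norm_eq_abs]
    calc |deriv v t + t * deriv (deriv v) t|
        ≤ |deriv v t| + |t * deriv (deriv v) t| := abs_add_le _ _
      _ ≤ C / t + t * (C / t ^ 2) := by
          refine add_le_add h1 ?_
          rw [abs_mul, abs_of_pos ht0]
          exact mul_le_mul_of_nonneg_left h2 ht0.le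
      _ = 2 * C / t := by field_simp; ring
      _ ≤ 2 * C / r := by
          apply div_le_div_of_nonneg_left (by positivity) hr0 ht.1
  have hmvt := norm_image_sub_le_of_norm_deriv_le_segment' hderiv hbound
  -- lower bound for |g| on the interval
  have hglb : ∀ t ∈ Set.Icc r r1, ε / 2 ≤ |g t| := by
    intro t ht
    have h1 := hmvt t ht
    have h2 : 2 * C / r * (t - r) ≤ ε / 2 := by
      have ht2 : t - r ≤ δ * r := by
        have := ht.2
        rw [hr1def] at this
        linarith [this]
      have h3 : 2 * C / r * (t - r) ≤ 2 * C / r * (δ * r) :=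
        mul_le_mul_of_nonneg_left ht2 (by positivity)
      have h4 : 2 * C / r * (δ * r) = ε / 2 := by
        rw [hδdef]; field_simp; ring
      linarith
    have h5 : |g r| - |g t| ≤ |g r - g t| := abs_sub_abs_le_abs_sub _ _
    rw [abs_sub_comm] at h5
    rw [Real.norm_eq_abs] at h1
    linarith
  -- lower bound for the tail integral: contradiction
  have hsub : Set.Ioc r r1 ⊆ Set.Ioi N := fun t ht => hrN.trans_lt ht.1
  have hmeas : (volume (Set.Ioc r r1)).toReal = δ * r := by
    rw [Real.volume_Ioc, ENNReal.toReal_ofReal (by linarith)]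
    rw [hr1def]; ring
  have hlow : c ≤ ∫ t in Set.Ioc r r1, f t := by
    have hconst : ∀ t ∈ Set.Ioc r r1, ε ^ 2 / 4 / r1 ≤ f t := by
      intro t ht
      have ht0 : 0 < t := hr0.trans ht.1
      have habs : ε / 2 ≤ |g t| := hglb t ⟨ht.1.le, ht.2⟩
      have hsq : (ε / 2) ^ 2 ≤ g t ^ 2 := by
        rw [← sq_abs (g t)]
        exact pow_le_pow_left₀ (by positivity) habs 2
      have hft : f t = g t ^ 2 / t := by
        simp only [hfdef, hgdef]
        field_simp
      rw [hft]
      calc ε ^ 2 / 4 / r1 = (ε / 2) ^ 2 / r1 := by ring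
        _ ≤ g t ^ 2 / t := div_le_div₀ (sq_nonneg _) hsq ht0 ht.2
    have hi := MeasureTheory.setIntegral_ge_of_const_le measurableSet_Ioc
      (by rw [Real.volume_Ioc]; exact ENNReal.ofReal_ne_top) hconst
      (hint.mono_set (fun t ht => hrR.trans ht.1))
    rw [measureReal_def, hmeas, smul_eq_mul] at hi
    have heq : ε ^ 2 / 4 / r1 * (δ * r) = c := by
      rw [hcdef, hr1def]; field_simp
    linarith
  have hmono : (∫ t in Set.Ioc r r1, f t) ≤ ∫ t in Set.Ioi N, f t := by
    apply MeasureTheory.setIntegral_mono_set (hint.mono_set (Set.Ioi_subset_Ioi hNR.le))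
    · filter_upwards [MeasureTheory.ae_restrict_mem measurableSet_Ioi] with t ht
      have ht0 : 0 < t := hN0.trans ht
      positivity
    · exact Filter.Eventually.of_forall hsub
  linarith
end

section
/- Let $n\ge3$, $0<\alpha<n-2$ with $n-2-2\alpha\ne 0$, and let $v:(R,\infty)\to(0,\infty)$ be a bounded $C^2$ solution of $v''+\frac{n-1-2\alpha}{r}v'-\frac{\lambda}{r^{2}}v+\frac{v^{p}}{r^{2}}+r^{\sigma}v^{q}=0$ where $\lambda=\alpha(n-2-\alpha)$, $p,q>1$, $\sigma<-2$. Assume $|v'(r)|\le C/r$ and $|v''(r)|\le C/r^2$ on $(R,\infty)$. Then $\int_R^{\infty} r\,v'(r)^2\,dr<\infty$. -/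
open Filter Topology Set MeasureTheory

theorem stmt_19 (n : ℕ) (hn : 3 ≤ n) (α p q σ lam R C : ℝ)
    (hα0 : 0 < α) (hα : α < (n : ℝ) - 2) (hα2 : (n : ℝ) - 2 - 2 * α ≠ 0)
    (hlam : lam = α * ((n : ℝ) - 2 - α))
    (hp : 1 < p) (hq : 1 < q) (hσ : σ < -2) (hR : 0 < R) (hC : 0 < C)
    (v : ℝ → ℝ) (hvpos : ∀ r > R, 0 < v r) (hbdd : ∃ M, ∀ r > R, v r ≤ M)
    (hC2 : ContDiffOn ℝ 2 v (Set.Ioi R))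
    (hode : ∀ r > R, deriv (deriv v) r + ((n : ℝ) - 1 - 2 * α) / r * deriv v r
      - lam / r ^ 2 * v r + v r ^ p / r ^ 2 + r ^ σ * v r ^ q = 0)
    (hd1 : ∀ r > R, |deriv v r| ≤ C / r)
    (hd2 : ∀ r > R, |deriv (deriv v) r| ≤ C / r ^ 2) :
    IntegrableOn (fun r => r * (deriv v r) ^ 2) (Set.Ioi R) := by
  obtain ⟨M, hM⟩ := hbdd
  set a : ℝ := R + 1 with ha_def
  have haR : R < a := by simp [ha_def]
  have ha0 : (0 : ℝ) < a := by linarith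
  have hM0 : 0 < M := lt_of_lt_of_le (hvpos a haR) (hM a haR)
  have hopen : IsOpen (Ioi R) := isOpen_Ioi
  -- smoothness facts
  have hv1 : ContDiffOn ℝ 1 (deriv v) (Ioi R) := by
    exact hC2.deriv_of_isOpen hopen (by norm_num : (1 : WithTop ℕ∞) + 1 ≤ 2)
  have hv'cont : ContinuousOn (deriv v) (Ioi R) := hv1.continuousOn
  have hvcont : ContinuousOn v (Ioi R) := hC2.continuousOn
  have hvdiff : ∀ x ∈ Ioi R, HasDerivAt v (deriv v x) x := fun x hx =>
    ((hC2.differentiableOn (by norm_num)).differentiableAt (hopen.mem_nhds hx)).hasDerivAt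
  have hv'diff : ∀ x ∈ Ioi R, HasDerivAt (deriv v) (deriv (deriv v) x) x := fun x hx =>
    ((hv1.differentiableOn (by norm_num)).differentiableAt (hopen.mem_nhds hx)).hasDerivAt
  -- the energy function and its derivative
  set c : ℝ := (n : ℝ) - 2 - 2 * α with hc_def
  set G : ℝ → ℝ := fun r => r ^ 2 * (deriv v r) ^ 2 / 2 - lam * (v r) ^ 2 / 2
    + (v r) ^ (p + 1) / (p + 1) with hG_def
  have hG : ∀ x ∈ Ioi R, HasDerivAt G
      (-(c * (x * (deriv v x) ^ 2)) - x ^ σ * v x ^ q * deriv v x * x ^ 2) x := by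
    intro x hx
    have hx0 : (0 : ℝ) < x := lt_trans hR hx
    have hvx : 0 < v x := hvpos x hx
    have h1 := ((hasDerivAt_pow 2 x).mul ((hv'diff x hx).pow 2)).div_const 2
    have h2 := (((hvdiff x hx).pow 2).const_mul lam).div_const 2
    have h3 := (HasDerivAt.rpow_const (p := p + 1) (hvdiff x hx) (Or.inl hvx.ne')).div_const (p + 1)
    rw [show p + 1 - 1 = p from by ring] at h3
    have hcomb := (h1.sub h2).add h3
    refine hcomb.congr_deriv ?_
    push_cast
    simp only [Pi.pow_apply]
    have hxne : x ≠ 0 := hx0.ne'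
    have hvv : deriv (deriv v) x = lam / x ^ 2 * v x - v x ^ p / x ^ 2
        - x ^ σ * v x ^ q - ((n : ℝ) - 1 - 2 * α) / x * deriv v x := by
      have := hode x hx; linarith
    rw [hvv, hc_def]
    have hp1 : p + 1 ≠ 0 := by positivity
    field_simp
    ring
  -- bound on G
  set GB : ℝ := C ^ 2 / 2 + |lam| * M ^ 2 / 2 + M ^ (p + 1) / (p + 1) with hGB_def
  have hGbd : ∀ x ∈ Ioi R, |G x| ≤ GB := by
    intro x hx
    have hx0 : (0 : ℝ) < x := lt_trans hR hx
    have hvx : 0 < v x := hvpos x hx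
    have t1 : x ^ 2 * (deriv v x) ^ 2 ≤ C ^ 2 := by
      have h1 : x * |deriv v x| ≤ C := by
        calc x * |deriv v x| ≤ x * (C / x) := by
              exact mul_le_mul_of_nonneg_left (hd1 x hx) hx0.le
          _ = C := by field_simp
      have h2 : x ^ 2 * (deriv v x) ^ 2 = (x * |deriv v x|) ^ 2 := by
        rw [mul_pow, sq_abs]
      rw [h2]
      exact pow_le_pow_left₀ (by positivity) h1 2
    have t2 : (v x) ^ 2 ≤ M ^ 2 := by
      exact pow_le_pow_left₀ hvx.le (hM x hx) 2
    have t3 : (v x) ^ (p + 1) ≤ M ^ (p + 1) :=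
      Real.rpow_le_rpow hvx.le (hM x hx) (by linarith)
    have t3' : (0:ℝ) ≤ (v x) ^ (p + 1) := Real.rpow_nonneg hvx.le _
    have habs : |G x| ≤ |x ^ 2 * (deriv v x) ^ 2 / 2| + |lam * (v x) ^ 2 / 2|
        + |(v x) ^ (p + 1) / (p + 1)| := by
      rw [hG_def]
      calc |x ^ 2 * (deriv v x) ^ 2 / 2 - lam * (v x) ^ 2 / 2 + (v x) ^ (p + 1) / (p + 1)|
          ≤ |x ^ 2 * (deriv v x) ^ 2 / 2 - lam * (v x) ^ 2 / 2|
            + |(v x) ^ (p + 1) / (p + 1)| := abs_add_le _ _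
        _ ≤ |x ^ 2 * (deriv v x) ^ 2 / 2| + |lam * (v x) ^ 2 / 2|
            + |(v x) ^ (p + 1) / (p + 1)| := by
              linarith [abs_sub (x ^ 2 * (deriv v x) ^ 2 / 2) (lam * (v x) ^ 2 / 2)]
    have e1 : |x ^ 2 * (deriv v x) ^ 2 / 2| = x ^ 2 * (deriv v x) ^ 2 / 2 :=
      abs_of_nonneg (by positivity)
    have e2 : |lam * (v x) ^ 2 / 2| = |lam| * (v x) ^ 2 / 2 := by
      rw [abs_div, abs_mul, abs_of_nonneg (sq_nonneg (v x))]; norm_num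
    have e3 : |(v x) ^ (p + 1) / (p + 1)| = (v x) ^ (p + 1) / (p + 1) :=
      abs_of_nonneg (by positivity)
    rw [e1, e2, e3] at habs
    have hl2 : |lam| * (v x) ^ 2 / 2 ≤ |lam| * M ^ 2 / 2 := by gcongr
    have hl3 : (v x) ^ (p + 1) / (p + 1) ≤ M ^ (p + 1) / (p + 1) := by gcongr
    rw [hGB_def]
    linarith [habs]
  -- the perturbation term and its majorant
  set g : ℝ → ℝ := fun x => C * M ^ q * (x ^ σ * x) with hg_def
  have hg_int : IntegrableOn g (Ioi a) := by
    have hbase : IntegrableOn (fun x : ℝ => x ^ (σ + 1)) (Ioi a) :=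
      integrableOn_Ioi_rpow_of_lt (by linarith) ha0
    refine MeasureTheory.IntegrableOn.congr_fun (hbase.const_mul (C * M ^ q))
      (fun x hx => ?_) measurableSet_Ioi
    have hx0 : (0 : ℝ) < x := lt_trans ha0 hx
    simp only [hg_def]
    rw [Real.rpow_add hx0, Real.rpow_one]
  set I₂ : ℝ := ∫ x in Ioi a, g x with hI₂_def
  have hg_nonneg : ∀ x ∈ Ioi a, 0 ≤ g x := by
    intro x hx
    have hx0 : (0 : ℝ) < x := lt_trans ha0 hx
    have : (0:ℝ) ≤ x ^ σ := Real.rpow_nonneg hx0.le σ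
    rw [hg_def]
    have : (0:ℝ) ≤ M ^ q := Real.rpow_nonneg hM0.le q
    positivity
  -- continuity of integrands
  have cont_f : ContinuousOn (fun x : ℝ => x * (deriv v x) ^ 2) (Ioi R) :=
    continuousOn_id.mul (hv'cont.pow 2)
  have cont_h : ContinuousOn (fun x : ℝ => x ^ σ * v x ^ q * deriv v x * x ^ 2) (Ioi R) := by
    refine ContinuousOn.mul (ContinuousOn.mul (ContinuousOn.mul ?_ ?_) hv'cont)
      (continuousOn_id.pow 2)
    · exact continuousOn_id.rpow_const fun x hx => Or.inl (ne_of_gt (lt_trans hR hx))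
    · exact hvcont.rpow_const fun x hx => Or.inl (hvpos x hx).ne'
  -- the main uniform bound
  set K : ℝ := (2 * GB + I₂) / |c| with hK_def
  have hcabs : (0:ℝ) < |c| := abs_pos.mpr hα2
  have main : ∀ T : ℝ, a ≤ T → (∫ x in a..T, x * (deriv v x) ^ 2) ≤ K := by
    intro T hT
    have hsub : uIcc a T ⊆ Ioi R := by
      rw [uIcc_of_le hT]
      exact fun x hx => lt_of_lt_of_le haR hx.1
    have intf : IntervalIntegrable (fun x : ℝ => x * (deriv v x) ^ 2) volume a T :=
      (cont_f.mono hsub).intervalIntegrable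
    have inth : IntervalIntegrable (fun x : ℝ => x ^ σ * v x ^ q * deriv v x * x ^ 2)
        volume a T := (cont_h.mono hsub).intervalIntegrable
    have key : (∫ x in a..T, (-(c * (x * (deriv v x) ^ 2))
        - x ^ σ * v x ^ q * deriv v x * x ^ 2)) = G T - G a := by
      apply intervalIntegral.integral_eq_sub_of_hasDerivAt (fun x hx => hG x (hsub hx))
      have intf_neg : IntervalIntegrable (fun x : ℝ => -(c * (x * (deriv v x) ^ 2)))
          volume a T := by exact (intf.const_mul c).neg
      exact intf_neg.sub inth
    have intf_neg : IntervalIntegrable (fun x : ℝ => -(c * (x * (deriv v x) ^ 2)))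
        volume a T := by exact (intf.const_mul c).neg
    rw [intervalIntegral.integral_sub intf_neg inth,
      intervalIntegral.integral_neg, intervalIntegral.integral_const_mul] at key
    set If : ℝ := ∫ x in a..T, x * (deriv v x) ^ 2 with hIf_def
    set Ih : ℝ := ∫ x in a..T, x ^ σ * v x ^ q * deriv v x * x ^ 2 with hIh_def
    have hIf_nonneg : 0 ≤ If := by
      rw [hIf_def]
      apply intervalIntegral.integral_nonneg hT
      intro x hx
      have hx0 : (0:ℝ) < x := lt_of_lt_of_le ha0 hx.1
      positivity
    have hIh_bd : |Ih| ≤ I₂ := by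
      have h1 : |Ih| ≤ |∫ x in a..T, g x| := by
        rw [hIh_def, ← Real.norm_eq_abs]
        apply (intervalIntegral.norm_integral_le_of_norm_le hT ?_
          ((intervalIntegrable_iff_integrableOn_Ioc_of_le hT).mpr
            (hg_int.mono_set Ioc_subset_Ioi_self))).trans (le_abs_self _)
        filter_upwards with x hx
        have hx0 : (0 : ℝ) < x := lt_trans ha0 hx.1
        have hxR : R < x := lt_trans haR hx.1
        have hb1 : |x ^ σ| = x ^ σ := abs_of_nonneg (Real.rpow_nonneg hx0.le σ)
        have hb2 : |v x ^ q| ≤ M ^ q := by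
          rw [abs_of_nonneg (Real.rpow_nonneg (hvpos x hxR).le q)]
          exact Real.rpow_le_rpow (hvpos x hxR).le (hM x hxR) (by linarith)
        have hb3 : |deriv v x| ≤ C / x := hd1 x hxR
        have hMq : (0:ℝ) ≤ M ^ q := Real.rpow_nonneg hM0.le q
        rw [Real.norm_eq_abs, abs_mul, abs_mul, abs_mul, hb1, abs_pow, abs_of_nonneg hx0.le]
        calc x ^ σ * |v x ^ q| * |deriv v x| * x ^ 2
            ≤ x ^ σ * M ^ q * (C / x) * x ^ 2 := by
              gcongr
          _ = g x := by rw [hg_def]; field_simp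
      have h2 : |∫ x in a..T, g x| ≤ I₂ := by
        have hnn : 0 ≤ ∫ x in a..T, g x := by
          apply intervalIntegral.integral_nonneg hT
          intro x hx
          have hx0 : (0:ℝ) < x := lt_of_lt_of_le ha0 hx.1
          have h1 : (0:ℝ) ≤ x ^ σ := Real.rpow_nonneg hx0.le σ
          have h2 : (0:ℝ) ≤ M ^ q := Real.rpow_nonneg hM0.le q
          simp only [hg_def]
          positivity
        rw [abs_of_nonneg hnn, intervalIntegral.integral_of_le hT, hI₂_def]
        apply setIntegral_mono_set hg_int
        · refine (ae_restrict_iff' measurableSet_Ioi).mpr ?_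
          filter_upwards with x hx using hg_nonneg x hx
        · exact HasSubset.Subset.eventuallyLE Ioc_subset_Ioi_self
      linarith
    have hGa : |G a| ≤ GB := hGbd a haR
    have hGT : |G T| ≤ GB := hGbd T (lt_of_lt_of_le haR hT)
    have hkey2 : c * If = G a - G T - Ih := by linarith [key]
    have habs : |c| * If ≤ 2 * GB + I₂ := by
      have : |c * If| ≤ |G a| + |G T| + |Ih| := by
        rw [hkey2]
        calc |G a - G T - Ih| ≤ |G a - G T| + |Ih| := abs_sub _ _
          _ ≤ |G a| + |G T| + |Ih| := by linarith [abs_sub (G a) (G T)]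
      rw [abs_mul, abs_of_nonneg hIf_nonneg] at this
      linarith
    rw [hK_def]
    rw [le_div_iff₀ hcabs]
    linarith [habs]
  -- measurability and local integrability
  have hmeas : Measurable (fun r : ℝ => r * (deriv v r) ^ 2) :=
    measurable_id.mul ((measurable_deriv v).pow_const 2)
  have hIocInt : ∀ b c' : ℝ, R ≤ b →
      IntegrableOn (fun r : ℝ => r * (deriv v r) ^ 2) (Ioc b c') := by
    intro b c' hb
    apply Measure.integrableOn_of_bounded (M := C ^ 2 / R) measure_Ioc_lt_top.ne
      hmeas.aestronglyMeasurable
    refine (ae_restrict_iff' measurableSet_Ioc).mpr ?_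
    filter_upwards with x hx
    have hxR : R < x := lt_of_le_of_lt hb hx.1
    have hx0 : (0:ℝ) < x := lt_trans hR hxR
    have h1 : (deriv v x) ^ 2 ≤ (C / x) ^ 2 := by
      rw [← sq_abs]
      exact pow_le_pow_left₀ (abs_nonneg _) (hd1 x hxR) 2
    rw [Real.norm_eq_abs, abs_of_nonneg (by positivity)]
    calc x * (deriv v x) ^ 2 ≤ x * (C / x) ^ 2 := by gcongr
      _ = C ^ 2 / x := by field_simp
      _ ≤ C ^ 2 / R := by gcongr
  have int1 : IntegrableOn (fun r : ℝ => r * (deriv v r) ^ 2) (Ioc R a) :=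
    hIocInt R a le_rfl
  have int2 : IntegrableOn (fun r : ℝ => r * (deriv v r) ^ 2) (Ioi a) := by
    apply integrableOn_Ioi_of_intervalIntegral_norm_bounded K a
      (fun T : ℝ => hIocInt a T haR.le) (tendsto_id (α := ℝ) (x := atTop))
    filter_upwards [eventually_ge_atTop a] with T hT
    have heq : ∀ x ∈ uIcc a T, ‖x * (deriv v x) ^ 2‖ = x * (deriv v x) ^ 2 := by
      intro x hx
      rw [uIcc_of_le hT] at hx
      have : (0:ℝ) < x := lt_of_lt_of_le ha0 hx.1
      rw [Real.norm_eq_abs, abs_of_nonneg (by positivity)]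
    rw [intervalIntegral.integral_congr heq]
    exact main T hT
  have hunion : Ioc R a ∪ Ioi a = Ioi R := Set.Ioc_union_Ioi_eq_Ioi haR.le
  rw [← hunion]
  exact int1.union int2
end
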